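/- The set ℓ^∞ \ c₀ is densely strongly 𝔠-algebrable: (ℓ^∞ \ c₀) ∪ {0} contains a dense subalgebra of ℓ^∞ (with coordinatewise product) generated by an algebraically independent set of cardinality continuum. -/

import Mathlib

open Filter Topology MvPolynomial Cardinal

set_option synthInstance.maxHeartbeats 1000000
set_option maxHeartbeats 1000000

namespace LC0

noncomputable abbrev L := lp (fun _ : ℕ => ℝ) ⊤

/-! ### An exponential–sum vanishing lemma -/

lemma expsum {ι : Type} [DecidableEq ι] (S : Finset ι) :
    ∀ t q : ι → ℝ, (∀ i ∈ S, 0 < t i) → Set.InjOn t S →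
    (∃ᶠ m : ℕ in atTop, ∑ i ∈ S, q i * t i ^ m = 0) →
    ∀ i ∈ S, q i = 0 := by
  induction S using Finset.strongInduction with
  | _ S ih =>
    intro t q ht hinj hfreq i hi
    obtain ⟨j, hjS, hjmax⟩ := S.exists_max_image t ⟨i, hi⟩
    have htj : 0 < t j := ht j hjS
    have hratio : ∀ i ∈ S, i ≠ j → t i / t j < 1 := by
      intro i hiS hij
      have : t i < t j := lt_of_le_of_ne (hjmax i hiS) (fun h => hij (hinj hiS hjS h))
      rw [div_lt_one htj]; exact this
    have hlim : Tendsto (fun m : ℕ => ∑ i ∈ S, q i * (t i / t j) ^ m) atTop (𝓝 (q j)) := by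
      have h0 : Tendsto (fun m : ℕ => ∑ i ∈ S, q i * (t i / t j) ^ m) atTop
          (𝓝 (∑ i ∈ S, if i = j then q j else 0)) := by
        apply tendsto_finset_sum
        intro i hiS
        by_cases hij : i = j
        · subst hij
          simp only [div_self (ne_of_gt htj), one_pow, mul_one, if_pos rfl]
          exact tendsto_const_nhds
        · simp only [if_neg hij]
          have := tendsto_pow_atTop_nhds_zero_of_lt_one
            (div_nonneg (le_of_lt (ht i hiS)) (le_of_lt htj)) (hratio i hiS hij)
          simpa using this.const_mul (q i)
      simpa [Finset.sum_ite_eq' S j (fun _ => q j), hjS] using h0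
    have hfreq' : ∃ᶠ m : ℕ in atTop,
        (fun m : ℕ => ∑ i ∈ S, q i * (t i / t j) ^ m) m = (fun _ => (0:ℝ)) m := by
      refine hfreq.mono ?_
      intro m hm
      simp only [div_pow]
      have : ∑ i ∈ S, q i * (t i ^ m / t j ^ m) = (∑ i ∈ S, q i * t i ^ m) / t j ^ m := by
        rw [Finset.sum_div]; congr 1; ext i; ring
      rw [this, hm, zero_div]
    have hqj : q j = 0 := tendsto_nhds_unique_of_frequently_eq hlim tendsto_const_nhds hfreq'
    by_cases hij : i = j
    · rw [hij]; exact hqj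
    · refine ih (S.erase j) (Finset.erase_ssubset hjS) t q
        (fun i hi => ht i (Finset.mem_of_mem_erase hi))
        (hinj.mono (fun x hx => Finset.mem_of_mem_erase hx)) ?_ i (Finset.mem_erase.mpr ⟨hij, hi⟩)
      refine hfreq.mono ?_
      intro m hm
      have := Finset.add_sum_erase S (fun i => q i * t i ^ m) hjS
      rw [← this] at hm
      simpa [hqj] using hm

lemma tendsto_eval {ι α : Type*} {l : Filter α} (P : MvPolynomial ι ℝ)
    (y : α → ι → ℝ) (b : ι → ℝ) (hy : ∀ i, Tendsto (fun a => y a i) l (𝓝 (b i))) :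
    Tendsto (fun a => eval (y a) P) l (𝓝 (eval b P)) := by
  induction P using MvPolynomial.induction_on with
  | C a => simpa using (tendsto_const_nhds : Tendsto (fun _ : α => a) l _)
  | add p q hp hq => simpa using hp.add hq
  | mul_X p i hp => simpa using hp.mul (hy i)

/-! ### The ultrafilter and generalized limits -/

noncomputable def UU : Ultrafilter ℕ := Ultrafilter.of cofinite

lemma UU_le_cofinite : (UU : Filter ℕ) ≤ cofinite := Ultrafilter.of_le _

lemma tendsto_pair (m : ℕ) : Tendsto (fun j => Nat.pair m j) (UU : Filter ℕ) atTop := by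
  have h1 : Function.Injective (Nat.pair m) := fun a b h => by
    have := congrArg (fun n => (Nat.unpair n).2) h
    simpa using this
  have h2 := h1.tendsto_cofinite
  rw [Nat.cofinite_eq_atTop] at h2
  exact h2.mono_left (Nat.cofinite_eq_atTop ▸ UU_le_cofinite)

lemma coord_abs_le (x : L) (n : ℕ) : |x n| ≤ ‖x‖ := by
  have := lp.norm_apply_le_norm (E := fun _ : ℕ => ℝ) ENNReal.top_ne_zero x n
  simpa using this

lemma exists_ulim (x : L) (m : ℕ) :
    ∃ a : ℝ, |a| ≤ ‖x‖ ∧ Tendsto (fun j => x (Nat.pair m j)) (UU : Filter ℕ) (𝓝 a) := by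
  have hc : IsCompact (Set.Icc (-‖x‖) ‖x‖) := isCompact_Icc
  obtain ⟨a, haI, hle⟩ := hc.ultrafilter_le_nhds (UU.map fun j => x (Nat.pair m j)) (by
    rw [Ultrafilter.coe_map, Filter.le_principal_iff, Filter.mem_map]
    refine Filter.univ_mem' ?_
    intro j
    have := coord_abs_le x (Nat.pair m j)
    simp only [Set.mem_preimage, Set.mem_Icc]
    constructor <;> [linarith [abs_le.mp this |>.1]; exact (abs_le.mp this).2])
  refine ⟨a, abs_le.mpr ⟨haI.1, haI.2⟩, ?_⟩
  rwa [Ultrafilter.coe_map] at hle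

noncomputable def hat (x : L) (m : ℕ) : ℝ := (exists_ulim x m).choose

lemma hat_abs_le (x : L) (m : ℕ) : |hat x m| ≤ ‖x‖ := (exists_ulim x m).choose_spec.1

lemma hat_tendsto (x : L) (m : ℕ) :
    Tendsto (fun j => x (Nat.pair m j)) (UU : Filter ℕ) (𝓝 (hat x m)) :=
  (exists_ulim x m).choose_spec.2

/-! ### The generators -/

noncomputable def rho (x : L) (ε : ℝ) (m : ℕ) : ℝ := (ε/2) * ⌊hat x m / (ε/2)⌋

lemma rho_sub_hat (x : L) (ε : ℝ) (hε : 0 < ε) (m : ℕ) : |rho x ε m - hat x m| ≤ ε/2 := by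
  have h2 : (0:ℝ) < ε/2 := by linarith
  have h1 : (ε/2) * ⌊hat x m / (ε/2)⌋ ≤ hat x m := by
    have := Int.floor_le (hat x m / (ε/2))
    calc (ε/2) * ⌊hat x m / (ε/2)⌋ ≤ (ε/2) * (hat x m / (ε/2)) := by
          exact mul_le_mul_of_nonneg_left this (le_of_lt h2)
      _ = hat x m := by field_simp
  have h3 : hat x m < (ε/2) * ⌊hat x m / (ε/2)⌋ + ε/2 := by
    calc hat x m = (hat x m / (ε/2)) * (ε/2) := by field_simp
      _ < (↑⌊hat x m / (ε/2)⌋ + 1) * (ε/2) := by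
          exact mul_lt_mul_of_pos_right (Int.lt_floor_add_one _) h2
      _ = (ε/2) * ⌊hat x m / (ε/2)⌋ + ε/2 := by ring
  rw [abs_le]
  unfold rho
  constructor <;> linarith

noncomputable def gfun (x : L) (ε cc : ℝ) : ℕ → ℝ := fun n =>
  x n + (rho x ε (Nat.unpair n).1 + (ε/2) * cc ^ (Nat.unpair n).1 - hat x (Nat.unpair n).1)

lemma gfun_sub_le (x : L) (ε cc : ℝ) (hε : 0 < ε) (hc0 : 0 ≤ cc) (hc1 : cc ≤ 1) (n : ℕ) :
    |gfun x ε cc n - x n| ≤ ε := by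
  have h1 := rho_sub_hat x ε hε (Nat.unpair n).1
  have h2 : |(ε/2) * cc ^ (Nat.unpair n).1| ≤ ε/2 := by
    rw [abs_mul, abs_of_nonneg (by positivity : (0:ℝ) ≤ ε/2)]
    have : cc ^ (Nat.unpair n).1 ≤ 1 := pow_le_one₀ hc0 hc1
    have h0 : (0:ℝ) ≤ cc ^ (Nat.unpair n).1 := by positivity
    rw [abs_of_nonneg h0]
    nlinarith
  have : gfun x ε cc n - x n =
      (rho x ε (Nat.unpair n).1 - hat x (Nat.unpair n).1) + (ε/2) * cc ^ (Nat.unpair n).1 := by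
    unfold gfun; ring
  rw [this]
  calc |_ + _| ≤ _ + _ := abs_add_le _ _
    _ ≤ ε/2 + ε/2 := add_le_add h1 h2
    _ = ε := by ring

lemma gfun_memℓp (x : L) (ε cc : ℝ) (hε : 0 < ε) (hc0 : 0 ≤ cc) (hc1 : cc ≤ 1) :
    Memℓp (gfun x ε cc) ⊤ := by
  apply memℓp_infty
  refine ⟨‖x‖ + ε, ?_⟩
  rintro - ⟨n, rfl⟩
  have h1 := gfun_sub_le x ε cc hε hc0 hc1 n
  have h2 := coord_abs_le x n
  simp only [Real.norm_eq_abs]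
  calc |gfun x ε cc n| = |x n + (gfun x ε cc n - x n)| := by ring_nf
    _ ≤ |x n| + |gfun x ε cc n - x n| := abs_add_le _ _
    _ ≤ ‖x‖ + ε := add_le_add h2 h1

/-! ### A multiplicatively independent family of bases -/

noncomputable def Lam : Type := Module.Basis.ofVectorSpaceIndex ℚ ℝ

noncomputable def bb : Module.Basis Lam ℚ ℝ := Module.Basis.ofVectorSpace ℚ ℝ

noncomputable def ww : Lam → ℚˣ := fun l => if 0 < bb l then -1 else 1

noncomputable def vv : Lam → ℝ := fun l => (ww l : ℚ) • bb l

lemma vv_li : LinearIndependent ℚ vv := by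
  have := bb.linearIndependent.units_smul ww
  convert this using 1
  funext l
  exact (Units.smul_def (ww l) (bb l)).symm

lemma vv_neg (l : Lam) : vv l < 0 := by
  have hne : bb l ≠ 0 := bb.ne_zero l
  unfold vv ww
  rcases lt_trichotomy (bb l) 0 with h | h | h
  · rw [if_neg (by linarith)]
    simpa using h
  · exact absurd h hne
  · rw [if_pos h]
    push_cast
    simp only [Rat.smul_def]
    push_cast
    nlinarith

noncomputable def cexp : Lam → ℝ := fun l => Real.exp (vv l)

lemma cexp_pos (l : Lam) : 0 < cexp l := Real.exp_pos _
lemma cexp_lt_one (l : Lam) : cexp l < 1 := Real.exp_lt_one_iff.mpr (vv_neg l)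
lemma log_cexp (l : Lam) : Real.log (cexp l) = vv l := Real.log_exp _

instance : Nonempty Lam := by
  unfold Lam
  exact bb.index_nonempty

lemma mk_Lam : #Lam = continuum := by
  have h1 : #ℝ = #(Lam →₀ ℚ) := Cardinal.mk_congr bb.repr.toEquiv
  rw [Cardinal.mk_finsupp_of_infinite' Lam ℚ, mk_denumerable ℚ, Cardinal.mk_real] at h1
  rcases max_cases (#Lam) ℵ₀ with ⟨he, _⟩ | ⟨he, hlt⟩
  · rw [he] at h1; exact h1.symm
  · rw [he] at h1
    exact absurd h1.symm (ne_of_lt aleph0_lt_continuum)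

lemma mk_L_le : #L ≤ continuum := by
  have h1 : #L ≤ #(∀ _ : ℕ, ℝ) := Cardinal.mk_le_of_injective (Subtype.val_injective)
  apply h1.trans
  rw [← Cardinal.power_def, Cardinal.mk_real, Cardinal.mk_nat, continuum_power_aleph0]

noncomputable abbrev Idx : Type := L × {r : ℝ // 0 < r}

lemma mk_Idx_le : #Idx ≤ continuum := by
  have h0 : #Idx = #L * #{r : ℝ // 0 < r} := by
    rw [show #Idx = #(L × {r : ℝ // 0 < r}) from rfl, Cardinal.mk_prod]
    simp
  rw [h0]
  calc #L * #{r : ℝ // 0 < r} ≤ continuum * continuum := by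
        exact mul_le_mul' mk_L_le ((Cardinal.mk_subtype_le _).trans_eq Cardinal.mk_real)
    _ = continuum := mul_eq_self aleph0_le_continuum

noncomputable def emb : Idx ↪ Lam :=
  Classical.choice ((Cardinal.le_def Idx Lam).mp (mk_Idx_le.trans mk_Lam.symm.le))

lemma prod_pow_inj {ι : Type} [Fintype ι] (lam : ι → Lam) (hlam : Function.Injective lam)
    (β β' : ι → ℕ) (h : ∏ i, cexp (lam i) ^ β i = ∏ i, cexp (lam i) ^ β' i) :
    β = β' := by
  have hlog : ∀ β₀ : ι → ℕ, Real.log (∏ i, cexp (lam i) ^ β₀ i)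
      = ∑ i, (β₀ i : ℝ) * vv (lam i) := by
    intro β₀
    rw [Real.log_prod (fun i _ => pow_ne_zero _ (ne_of_gt (cexp_pos _)))]
    congr 1; funext i
    rw [Real.log_pow, log_cexp]
  have h2 : ∑ i, ((β i : ℝ) - (β' i : ℝ)) * vv (lam i) = 0 := by
    have := congrArg Real.log h
    rw [hlog, hlog] at this
    rw [← sub_eq_zero] at this
    rw [← this, ← Finset.sum_sub_distrib]
    congr 1; funext i; ring
  have hli : LinearIndependent ℚ (vv ∘ lam) := vv_li.comp lam hlam
  have h3 := (Fintype.linearIndependent_iff.mp hli) (fun i => (β i : ℚ) - (β' i : ℚ)) ?_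
  · funext i
    have := h3 i
    have : ((β i : ℚ)) = ((β' i : ℚ)) := by linarith [sub_eq_zero.mp this]
    exact_mod_cast this
  · rw [← h2]
    congr 1; funext i
    rw [Rat.smul_def]
    push_cast
    rfl

/-! ### The generator family -/

noncomputable def Gam (p : Idx) : L :=
  ⟨gfun p.1 p.2.1 (cexp (emb p)),
    gfun_memℓp _ _ _ p.2.2 (le_of_lt (cexp_pos _)) (le_of_lt (cexp_lt_one _))⟩

lemma Gam_coe (p : Idx) (n : ℕ) : (Gam p) n = gfun p.1 p.2.1 (cexp (emb p)) n := rfl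

noncomputable def GG : Set L := Set.range Gam

lemma Gam_tendsto (p : Idx) (m : ℕ) :
    Tendsto (fun j => (Gam p) (Nat.pair m j)) (UU : Filter ℕ)
      (𝓝 (rho p.1 p.2.1 m + (p.2.1/2) * cexp (emb p) ^ m)) := by
  have h := hat_tendsto p.1 m
  have heq : ∀ j, (Gam p) (Nat.pair m j) = p.1 (Nat.pair m j) +
      (rho p.1 p.2.1 m + (p.2.1/2) * cexp (emb p) ^ m - hat p.1 m) := by
    intro j; rw [Gam_coe]; unfold gfun; rw [Nat.unpair_pair]
  rw [tendsto_congr heq]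
  have h2 := h.add (tendsto_const_nhds
    (x := rho p.1 p.2.1 m + (p.2.1/2) * cexp (emb p) ^ m - hat p.1 m))
  convert h2 using 1
  ring

lemma Gam_dist (p : Idx) : ‖Gam p - p.1‖ ≤ p.2.1 := by
  apply lp.norm_le_of_forall_le (le_of_lt p.2.2)
  intro n
  have hc : (Gam p - p.1) n = gfun p.1 p.2.1 (cexp (emb p)) n - p.1 n := rfl
  rw [Real.norm_eq_abs, hc]
  exact gfun_sub_le _ _ _ p.2.2 (le_of_lt (cexp_pos _)) (le_of_lt (cexp_lt_one _)) n

/-! ### Coordinate evaluation -/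

noncomputable def coordA (n : ℕ) : L →ₐ[ℝ] ℝ where
  toFun f := f n
  map_one' := rfl
  map_mul' _ _ := rfl
  map_zero' := rfl
  map_add' _ _ := rfl
  commutes' _ := rfl

lemma aeval_eq_eval' {ι : Type} (y : ι → ℝ) (P : MvPolynomial ι ℝ) : aeval y P = eval y P := by
  rw [aeval_def]
  rfl

lemma coord_aeval {ι : Type} (g : ι → L) (P : MvPolynomial ι ℝ) (n : ℕ) :
    (aeval g P : L) n = eval (fun i => g i n) P := by
  have h := congrFun (congrArg DFunLike.coe (comp_aeval (φ := coordA n) (f := g))) P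
  simp only [AlgHom.comp_apply] at h
  rw [show ((aeval g P : L) n) = coordA n (aeval g P) from rfl, h, aeval_eq_eval']
  rfl

/-! ### The main lemma -/

lemma main {ι : Type} [Fintype ι] [DecidableEq ι] (p : ι → Idx) (hp : Function.Injective p)
    (P : MvPolynomial ι ℝ) (hP : P ≠ 0) :
    ¬ Tendsto (fun n => (aeval (fun i => Gam (p i)) P : L) n) atTop (𝓝 (0:ℝ)) := by
  classical
  intro hT
  set a : ι → ℝ := fun i => (p i).2.1 / 2 with ha
  have ha_pos : ∀ i, 0 < a i := fun i => by
    have := (p i).2.2; rw [ha]; positivity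
  set lam : ι → Lam := fun i => emb (p i) with hlam
  have hlam_inj : Function.Injective lam := emb.injective.comp hp
  set cc : ι → ℝ := fun i => cexp (lam i) with hcc
  set V : ℕ → ι → ℝ := fun m i => rho (p i).1 (p i).2.1 m + a i * cc i ^ m with hV
  -- step 1: eval (V m) P = 0 for all m
  have hstep1 : ∀ m, eval (V m) P = 0 := by
    intro m
    have hA : Tendsto (fun j => eval (fun i => (Gam (p i)) (Nat.pair m j)) P)
        (UU : Filter ℕ) (𝓝 (eval (V m) P)) := by
      apply tendsto_eval
      intro i
      exact Gam_tendsto (p i) m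
    have hB : Tendsto (fun j => eval (fun i => (Gam (p i)) (Nat.pair m j)) P)
        (UU : Filter ℕ) (𝓝 (0:ℝ)) := by
      have h2 : ∀ j, (aeval (fun i => Gam (p i)) P : L) (Nat.pair m j)
          = eval (fun i => (Gam (p i)) (Nat.pair m j)) P := by
        intro j; exact coord_aeval _ P _
      exact (hT.comp (tendsto_pair m)).congr h2
    exact tendsto_nhds_unique hA hB
  -- step 2: pigeonhole on the floors
  set K : ι → ℕ → ℤ := fun i m => ⌊hat (p i).1 m / a i⌋ with hK
  have hrho : ∀ i m, rho (p i).1 (p i).2.1 m = a i * K i m := fun i m => rfl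
  set Bd : ι → ℤ := fun i => ⌈‖(p i).1‖ / a i⌉ + 1 with hBd
  have hKmem : ∀ m i, K i m ∈ Finset.Icc (-(Bd i)) (Bd i) := by
    intro m i
    have hai := ha_pos i
    have habs := abs_le.mp (hat_abs_le (p i).1 m)
    have hub : hat (p i).1 m / a i ≤ ‖(p i).1‖ / a i :=
      (div_le_div_iff_of_pos_right hai).mpr habs.2
    have hlb : -(‖(p i).1‖ / a i) ≤ hat (p i).1 m / a i := by
      rw [← neg_div]
      exact (div_le_div_iff_of_pos_right hai).mpr habs.1
    rw [Finset.mem_Icc, hBd]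
    constructor
    · calc -(⌈‖(p i).1‖ / a i⌉ + 1) ≤ -⌈‖(p i).1‖ / a i⌉ := by omega
        _ = ⌊-(‖(p i).1‖ / a i)⌋ := (Int.floor_neg).symm
        _ ≤ K i m := Int.floor_mono hlb
    · calc K i m ≤ ⌈hat (p i).1 m / a i⌉ := Int.floor_le_ceil _
        _ ≤ ⌈‖(p i).1‖ / a i⌉ := Int.ceil_le_ceil hub
        _ ≤ ⌈‖(p i).1‖ / a i⌉ + 1 := by omega
  set F : ℕ → (∀ i : ι, (Finset.Icc (-(Bd i)) (Bd i) : Finset ℤ)) :=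
    fun m i => ⟨K i m, hKmem m i⟩ with hF
  obtain ⟨y, hy⟩ := Finite.exists_infinite_fiber F
  set M : Set ℕ := F ⁻¹' {y} with hM
  have hMinf : M.Infinite := Set.infinite_coe_iff.mp hy
  have hKM : ∀ m ∈ M, ∀ i, K i m = (y i : ℤ) := by
    intro m hm i
    have : F m = y := hm
    exact congrArg Subtype.val (congrFun this i)
  -- step 3: substitution polynomial
  set w : ι → ℝ := fun i => a i * ((y i : ℤ) : ℝ) with hw
  set σs : ι → MvPolynomial ι ℝ := fun i => C (w i) + C (a i) * X i with hσs
  set Q : MvPolynomial ι ℝ := bind₁ σs P with hQ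
  have hQne : Q ≠ 0 := by
    set τs : ι → MvPolynomial ι ℝ := fun i => C (-(w i) * (a i)⁻¹) + C (a i)⁻¹ * X i with hτs
    have hback : bind₁ τs Q = P := by
      rw [hQ, bind₁_bind₁]
      have hXi : (fun i => bind₁ τs (σs i)) = X := by
        funext i
        have hane : a i ≠ 0 := ne_of_gt (ha_pos i)
        simp only [hσs, hτs, map_add, map_mul, map_neg, bind₁_C_right, bind₁_X_right]
        have hCa : (C (a i) * C ((a i)⁻¹) : MvPolynomial ι ℝ) = 1 := by
          rw [← C_mul, mul_inv_cancel₀ hane, C_1]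
        linear_combination (X i - C (w i)) * hCa
      rw [hXi, bind₁_X_left]
      rfl
    intro h0
    rw [h0, map_zero] at hback
    exact hP hback.symm
  -- step 4: exponential sums vanish on M
  have hQeval : ∀ m ∈ M, eval (fun i => cc i ^ m) Q = 0 := by
    intro m hm
    have h1 : eval (fun i => cc i ^ m) Q = eval (fun i => w i + a i * cc i ^ m) P := by
      rw [hQ, ← aeval_eq_eval', aeval_bind₁]
      have hsub : (fun i => aeval (fun i => cc i ^ m) (σs i)) =
          fun i => w i + a i * cc i ^ m := by
        funext i
        simp [hσs]
      rw [hsub, aeval_eq_eval']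
    rw [h1]
    have h2 : ∀ i, V m i = w i + a i * cc i ^ m := by
      intro i
      show rho (p i).1 (p i).2.1 m + a i * cc i ^ m = _
      rw [hrho i m, hKM m hm i, hw]
    rw [show (fun i => w i + a i * cc i ^ m) = V m from funext (fun i => (h2 i).symm)]
    exact hstep1 m
  -- step 5: expand as exponential sums and conclude Q = 0
  set t : (ι →₀ ℕ) → ℝ := fun d => ∏ i, cc i ^ d i with hT2
  have hexp : ∀ m, eval (fun i => cc i ^ m) Q = ∑ d ∈ Q.support, coeff d Q * t d ^ m := by
    intro m
    rw [eval_eq']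
    congr 1
    funext d
    congr 1
    rw [hT2, ← Finset.prod_pow]
    congr 1
    funext i
    rw [← pow_mul, mul_comm, pow_mul]
  have hcoeffs : ∀ d ∈ Q.support, coeff d Q = 0 := by
    apply expsum Q.support t (fun d => coeff d Q)
    · intro d _
      rw [hT2]
      apply Finset.prod_pos
      intro i _
      exact pow_pos (cexp_pos _) _
    · intro d hd d' hd' hdd'
      have := prod_pow_inj lam hlam_inj (fun i => d i) (fun i => d' i) hdd'
      ext i
      exact congrFun this i
    · rw [Nat.frequently_atTop_iff_infinite]
      apply hMinf.mono
      intro m hm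
      simp only [Set.mem_setOf_eq]
      rw [← hexp]
      exact hQeval m hm
  apply hQne
  apply (MvPolynomial.support_eq_empty).mp
  exact Finset.eq_empty_iff_forall_notMem.mpr
    (fun d hd => (MvPolynomial.mem_support_iff.mp hd) (hcoeffs d hd))


/-! ### Membership representation -/

lemma GG_mem {f : L} (h : f ∈ GG) : ∃ p, Gam p = f := h

lemma GG_subset_adjoin : GG ⊆ ↑(NonUnitalAlgebra.adjoin ℝ GG) :=
  NonUnitalAlgebra.subset_adjoin ℝ

lemma repr_mem {f : L} (hf : f ∈ NonUnitalAlgebra.adjoin ℝ GG) :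
    ∃ (s : Finset L) (_ : (s : Set L) ⊆ GG) (P : MvPolynomial {z : L // z ∈ s} ℝ),
      f = aeval (fun z => z.val) P := by
  classical
  induction hf using NonUnitalAlgebra.adjoin_induction with
  | mem x hx =>
    exact ⟨{x}, by simpa using hx, X ⟨x, Finset.mem_singleton_self x⟩, by simp⟩
  | zero => exact ⟨∅, by simp, 0, by simp⟩
  | add x y hx hy ihx ihy =>
    obtain ⟨s₁, hs₁, P₁, e₁⟩ := ihx
    obtain ⟨s₂, hs₂, P₂, e₂⟩ := ihy
    refine ⟨s₁ ∪ s₂, ?_, ?_, ?_⟩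
    · intro z hz
      rcases Finset.mem_union.mp hz with h | h
      exacts [hs₁ h, hs₂ h]
    · exact rename (fun z => ⟨z.1, Finset.mem_union_left _ z.2⟩) P₁ +
        rename (fun z => ⟨z.1, Finset.mem_union_right _ z.2⟩) P₂
    · rw [map_add, aeval_rename, aeval_rename]
      have c₁ : aeval ((fun z : {z : L // z ∈ s₁ ∪ s₂} => z.val) ∘
          (fun z : {z : L // z ∈ s₁} => (⟨z.1, Finset.mem_union_left _ z.2⟩ :
            {z : L // z ∈ s₁ ∪ s₂}))) P₁ = aeval (fun z : {z : L // z ∈ s₁} => z.val) P₁ := rfl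
      have c₂ : aeval ((fun z : {z : L // z ∈ s₁ ∪ s₂} => z.val) ∘
          (fun z : {z : L // z ∈ s₂} => (⟨z.1, Finset.mem_union_right _ z.2⟩ :
            {z : L // z ∈ s₁ ∪ s₂}))) P₂ = aeval (fun z : {z : L // z ∈ s₂} => z.val) P₂ := rfl
      rw [c₁, c₂, ← e₁, ← e₂]
  | mul x y hx hy ihx ihy =>
    obtain ⟨s₁, hs₁, P₁, e₁⟩ := ihx
    obtain ⟨s₂, hs₂, P₂, e₂⟩ := ihy
    refine ⟨s₁ ∪ s₂, ?_, ?_, ?_⟩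
    · intro z hz
      rcases Finset.mem_union.mp hz with h | h
      exacts [hs₁ h, hs₂ h]
    · exact rename (fun z => ⟨z.1, Finset.mem_union_left _ z.2⟩) P₁ *
        rename (fun z => ⟨z.1, Finset.mem_union_right _ z.2⟩) P₂
    · rw [map_mul, aeval_rename, aeval_rename]
      have c₁ : aeval ((fun z : {z : L // z ∈ s₁ ∪ s₂} => z.val) ∘
          (fun z : {z : L // z ∈ s₁} => (⟨z.1, Finset.mem_union_left _ z.2⟩ :
            {z : L // z ∈ s₁ ∪ s₂}))) P₁ = aeval (fun z : {z : L // z ∈ s₁} => z.val) P₁ := rfl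
      have c₂ : aeval ((fun z : {z : L // z ∈ s₁ ∪ s₂} => z.val) ∘
          (fun z : {z : L // z ∈ s₂} => (⟨z.1, Finset.mem_union_right _ z.2⟩ :
            {z : L // z ∈ s₁ ∪ s₂}))) P₂ = aeval (fun z : {z : L // z ∈ s₂} => z.val) P₂ := rfl
      rw [c₁, c₂, ← e₁, ← e₂]
  | smul r x hx ihx =>
    obtain ⟨s₁, hs₁, P₁, e₁⟩ := ihx
    refine ⟨s₁, hs₁, C r * P₁, ?_⟩
    have hCr : aeval (fun z : {z : L // z ∈ s₁} => z.val) (C r * P₁)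
        = algebraMap ℝ L r * aeval (fun z : {z : L // z ∈ s₁} => z.val) P₁ := by
      rw [map_mul, aeval_C]
    rw [hCr, ← e₁, ← Algebra.smul_def]

/-! ### Density -/

lemma GG_dense : Dense (↑(NonUnitalAlgebra.adjoin ℝ GG) : Set L) := by
  rw [Metric.dense_iff]
  intro x r hr
  refine ⟨Gam ⟨x, ⟨r/2, by linarith⟩⟩, ?_, GG_subset_adjoin ⟨_, rfl⟩⟩
  rw [Metric.mem_ball, dist_eq_norm]
  have h := Gam_dist ⟨x, ⟨r/2, by linarith⟩⟩
  calc ‖Gam ⟨x, ⟨r/2, by linarith⟩⟩ - x‖ ≤ r/2 := h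
    _ < r := by linarith

/-! ### Cardinality -/

lemma mk_GG : #GG = continuum := by
  apply le_antisymm
  · exact (Cardinal.mk_set_le GG).trans mk_L_le
  · have h1 : #(ℕ → Bool) = continuum := by
      rw [← Cardinal.power_def, Cardinal.mk_bool, Cardinal.mk_nat, Cardinal.two_power_aleph0]
    have hφ : Nonempty (ℝ ↪ (ℕ → Bool)) :=
      (Cardinal.le_def ℝ (ℕ → Bool)).mp (by rw [Cardinal.mk_real, h1])
    obtain ⟨φ⟩ := hφ
    have hmem : ∀ r : ℝ, Memℓp (fun n => if φ r n then (3:ℝ) else 0) ⊤ := by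
      intro r
      apply memℓp_infty
      refine ⟨3, ?_⟩
      rintro - ⟨n, rfl⟩
      dsimp only
      split <;> simp
    set xseq : ℝ → L := fun r => ⟨fun n => if φ r n then (3:ℝ) else 0, hmem r⟩ with hxseq
    have hinj : Function.Injective (fun r : ℝ => Gam ⟨xseq r, ⟨1, one_pos⟩⟩) := by
      intro r s hrs
      by_contra hne
      have hφne : φ r ≠ φ s := fun h => hne (φ.injective h)
      obtain ⟨n, hn⟩ := Function.ne_iff.mp hφne
      have d1 : ∀ u : ℝ, |Gam ⟨xseq u, ⟨1, one_pos⟩⟩ n - xseq u n| ≤ 1 := by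
        intro u
        have h2 := coord_abs_le (Gam ⟨xseq u, ⟨1, one_pos⟩⟩ - xseq u) n
        have h3 : (Gam ⟨xseq u, ⟨1, one_pos⟩⟩ - xseq u) n
            = Gam ⟨xseq u, ⟨1, one_pos⟩⟩ n - xseq u n := rfl
        rw [h3] at h2
        exact h2.trans (Gam_dist ⟨xseq u, ⟨1, one_pos⟩⟩)
      have d2 : |xseq r n - xseq s n| = 3 := by
        have hval : ∀ u : ℝ, xseq u n = if φ u n then (3:ℝ) else 0 := fun u => rfl
        have hcases : (φ r n = true ∧ φ s n = false) ∨ (φ r n = false ∧ φ s n = true) := by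
          rcases Bool.eq_false_or_eq_true (φ r n) with h | h <;>
            rcases Bool.eq_false_or_eq_true (φ s n) with h' | h'
          · exact absurd (h.trans h'.symm) hn
          · exact Or.inl ⟨h, h'⟩
          · exact Or.inr ⟨h, h'⟩
          · exact absurd (h.trans h'.symm) hn
        rcases hcases with ⟨h, h2⟩ | ⟨h, h2⟩ <;> rw [hval, hval, h, h2] <;> simp
      have hrs' : Gam ⟨xseq r, ⟨1, one_pos⟩⟩ = Gam ⟨xseq s, ⟨1, one_pos⟩⟩ := hrs
      have hcoord : (Gam ⟨xseq r, ⟨1, one_pos⟩⟩ : L) n = Gam ⟨xseq s, ⟨1, one_pos⟩⟩ n := by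
        rw [hrs']
      have h4 : |xseq r n - xseq s n| ≤ 2 := by
        have e : xseq r n - xseq s n = -(Gam ⟨xseq r, ⟨1, one_pos⟩⟩ n - xseq r n)
            + (Gam ⟨xseq s, ⟨1, one_pos⟩⟩ n - xseq s n) := by
          rw [hcoord]; ring
        rw [e]
        calc |_ + _| ≤ |-(Gam ⟨xseq r, ⟨1, one_pos⟩⟩ n - xseq r n)|
              + |Gam ⟨xseq s, ⟨1, one_pos⟩⟩ n - xseq s n| := abs_add_le _ _
          _ ≤ 1 + 1 := add_le_add (by rw [abs_neg]; exact d1 r) (d1 s)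
          _ = 2 := by norm_num
      rw [d2] at h4
      norm_num at h4
    have hinj2 : Function.Injective (fun r : ℝ => (⟨Gam ⟨xseq r, ⟨1, one_pos⟩⟩,
        Set.mem_range_self _⟩ : GG)) := by
      intro r s h
      exact hinj (congrArg Subtype.val h)
    have := Cardinal.mk_le_of_injective hinj2
    rwa [Cardinal.mk_real] at this

end LC0

open LC0 in
theorem linfty_setminus_c0_densely_strongly_continuum_algebrable :
    ∃ G : Set (lp (fun _ : ℕ => ℝ) ⊤),
      Cardinal.mk G = Cardinal.continuum ∧
      (∀ (k : ℕ) (g : Fin k → lp (fun _ : ℕ => ℝ) ⊤),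
        Function.Injective g → (∀ i, g i ∈ G) →
        ∀ P : MvPolynomial (Fin k) ℝ, MvPolynomial.constantCoeff P = 0 →
          MvPolynomial.aeval g P = 0 → P = 0) ∧
      Dense (↑(NonUnitalAlgebra.adjoin ℝ G) : Set (lp (fun _ : ℕ => ℝ) ⊤)) ∧
      ∀ f ∈ NonUnitalAlgebra.adjoin ℝ G, f ≠ 0 →
        ¬ Tendsto (fun n => f n) atTop (𝓝 (0 : ℝ)) := by
  classical
  refine ⟨GG, mk_GG, ?_, GG_dense, ?_⟩
  · intro k g hginj hgG P hPc hPeval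
    by_contra hP
    choose p hpΓ using fun i => GG_mem (hgG i)
    have hpinj : Function.Injective p := by
      intro i j hij
      apply hginj
      rw [← hpΓ i, ← hpΓ j, hij]
    apply main p hpinj P hP
    have hge : (fun i => Gam (p i)) = g := funext hpΓ
    rw [hge, hPeval]
    have hz : ∀ n : ℕ, ((0 : L) n) = (0:ℝ) := fun n => rfl
    simp only [hz]
    exact tendsto_const_nhds
  · intro f hf hfne hT
    obtain ⟨s, hsG, P, rfl⟩ := repr_mem hf
    have hP : P ≠ 0 := fun h => hfne (by rw [h, map_zero])
    choose p hpΓ using fun z : {z : L // z ∈ s} => GG_mem (hsG z.2)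
    have hpinj : Function.Injective p := by
      intro i j hij
      have : (i : L) = (j : L) := by rw [← hpΓ i, ← hpΓ j, hij]
      exact Subtype.val_injective this
    apply main p hpinj P hP
    have hge : (fun z => Gam (p z)) = (fun z : {z : L // z ∈ s} => z.val) := funext hpΓ
    rw [hge]
    exact hT
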